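/- limsup_{m→∞} (1/m) log (∑_{k=0}^m C(m,k) |2^{m−k} − 3^k|) = log 4. In fact the limit exists and equals log 4. -/

import Mathlib

open Filter Real Finset

private lemma sum3 (m : ℕ) :
    ∑ k ∈ Finset.range (m + 1), (m.choose k : ℝ) * 3 ^ k = 4 ^ m := by
  have h := add_pow (3 : ℝ) 1 m
  simp only [one_pow, mul_one] at h
  norm_num at h
  rw [h]
  exact Finset.sum_congr rfl fun k _ => by ring

private lemma sum2 (m : ℕ) :
    ∑ k ∈ Finset.range (m + 1), (m.choose k : ℝ) * 2 ^ (m - k) = 3 ^ m := by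
  have h := add_pow (1 : ℝ) 2 m
  simp only [one_pow, one_mul] at h
  norm_num at h
  rw [h]
  exact Finset.sum_congr rfl fun k _ => by ring

private lemma lower (m : ℕ) (hm : 1 ≤ m) :
    (4 : ℝ) ^ (m - 1) ≤ ∑ k ∈ Finset.range (m + 1),
      (m.choose k : ℝ) * |(2 : ℝ) ^ (m - k) - 3 ^ k| := by
  have h1 : (4 : ℝ) ^ m - 3 ^ m ≤ ∑ k ∈ Finset.range (m + 1),
      (m.choose k : ℝ) * |(2 : ℝ) ^ (m - k) - 3 ^ k| := by
    rw [← sum3 m, ← sum2 m, ← Finset.sum_sub_distrib]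
    apply Finset.sum_le_sum
    intro k _
    rw [← mul_sub]
    apply mul_le_mul_of_nonneg_left _ (by positivity)
    have := neg_abs_le ((2 : ℝ) ^ (m - k) - 3 ^ k)
    have h2 := le_abs_self ((2 : ℝ) ^ (m - k) - 3 ^ k)
    rw [abs_sub_comm] at h2 ⊢
    nlinarith [abs_nonneg ((3:ℝ) ^ k - 2 ^ (m - k)), le_abs_self ((3:ℝ) ^ k - 2 ^ (m - k))]
  refine le_trans ?_ h1
  have h3 : (3 : ℝ) ^ m ≤ 3 / 4 * 4 ^ m := by
    have : ((3 : ℝ) / 4) ^ m ≤ 3 / 4 := by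
      calc ((3:ℝ)/4) ^ m ≤ (3/4) ^ 1 := by
            apply pow_le_pow_of_le_one (by norm_num) (by norm_num) hm
        _ = 3/4 := pow_one _
    calc (3:ℝ)^m = (3/4)^m * 4^m := by rw [div_pow, div_mul_cancel₀]; positivity
      _ ≤ 3/4 * 4^m := by nlinarith [pow_pos (show (0:ℝ) < 4 by norm_num) m]
  have h4 : (4 : ℝ) ^ (m - 1) = 4 ^ m / 4 := by
    rw [eq_div_iff (by norm_num), ← pow_succ]
    congr 1
    omega
  rw [h4]
  nlinarith [pow_pos (show (0:ℝ) < 4 by norm_num) m]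

private lemma upper (m : ℕ) :
    ∑ k ∈ Finset.range (m + 1), (m.choose k : ℝ) * |(2 : ℝ) ^ (m - k) - 3 ^ k|
      ≤ 2 * 4 ^ m := by
  have h1 : ∑ k ∈ Finset.range (m + 1), (m.choose k : ℝ) * |(2 : ℝ) ^ (m - k) - 3 ^ k|
      ≤ ∑ k ∈ Finset.range (m + 1), (m.choose k : ℝ) * (2 ^ (m - k) + 3 ^ k) := by
    apply Finset.sum_le_sum
    intro k _
    apply mul_le_mul_of_nonneg_left _ (by positivity)
    rw [abs_sub_le_iff]
    constructor <;> nlinarith [pow_pos (show (0:ℝ) < 2 by norm_num) (m - k),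
      pow_pos (show (0:ℝ) < 3 by norm_num) k]
  have h2 : ∑ k ∈ Finset.range (m + 1), (m.choose k : ℝ) * (2 ^ (m - k) + 3 ^ k)
      = 3 ^ m + 4 ^ m := by
    simp only [mul_add, Finset.sum_add_distrib, sum2, sum3]
  have h3 : (3 : ℝ) ^ m ≤ 4 ^ m := by
    apply pow_le_pow_left₀ (by norm_num) (by norm_num)
  linarith

/-- `limsup_{m→∞} (1/m) log (∑_{k=0}^m C(m,k) |2^(m−k) − 3^k|) = log 4`; in fact the limit
exists and equals `log 4`. -/
theorem stmt8 :
    Filter.Tendsto (fun m : ℕ =>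
        Real.log (∑ k ∈ Finset.range (m + 1),
          (m.choose k : ℝ) * |(2 : ℝ) ^ (m - k) - 3 ^ k|) / m)
      Filter.atTop (nhds (Real.log 4)) ∧
    Filter.atTop.limsup (fun m : ℕ =>
        Real.log (∑ k ∈ Finset.range (m + 1),
          (m.choose k : ℝ) * |(2 : ℝ) ^ (m - k) - 3 ^ k|) / m) = Real.log 4 := by
  have htend : Filter.Tendsto (fun m : ℕ =>
        Real.log (∑ k ∈ Finset.range (m + 1),
          (m.choose k : ℝ) * |(2 : ℝ) ^ (m - k) - 3 ^ k|) / m)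
      Filter.atTop (nhds (Real.log 4)) := by
    have hlow : Filter.Tendsto (fun m : ℕ => Real.log 4 - Real.log 4 / m)
        Filter.atTop (nhds (Real.log 4)) := by
      have := (tendsto_const_nhds (x := Real.log 4) (f := Filter.atTop (α := ℕ))).sub
        ((tendsto_natCast_atTop_atTop (R := ℝ)).inv_tendsto_atTop.const_mul (Real.log 4))
      simpa [div_eq_mul_inv] using this
    have hhigh : Filter.Tendsto (fun m : ℕ => Real.log 4 + Real.log 2 / m)
        Filter.atTop (nhds (Real.log 4)) := by
      have := (tendsto_const_nhds (x := Real.log 4) (f := Filter.atTop (α := ℕ))).add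
        ((tendsto_natCast_atTop_atTop (R := ℝ)).inv_tendsto_atTop.const_mul (Real.log 2))
      simpa [div_eq_mul_inv] using this
    apply tendsto_of_tendsto_of_tendsto_of_le_of_le' hlow hhigh
    · filter_upwards [Filter.eventually_atTop.2 ⟨1, fun m hm => hm⟩] with m hm
      have hS := lower m hm
      have hpos : (0 : ℝ) < 4 ^ (m - 1) := by positivity
      have hlog : ((m : ℝ) - 1) * Real.log 4 ≤
          Real.log (∑ k ∈ Finset.range (m + 1),
            (m.choose k : ℝ) * |(2 : ℝ) ^ (m - k) - 3 ^ k|) := by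
        calc ((m : ℝ) - 1) * Real.log 4 = Real.log (4 ^ (m - 1)) := by
              rw [Real.log_pow]
              congr 1
              have : (1 : ℕ) ≤ m := hm
              push_cast [Nat.cast_sub this]
              ring
          _ ≤ _ := Real.log_le_log hpos hS
      have hmpos : (0 : ℝ) < m := by exact_mod_cast hm
      rw [sub_le_iff_le_add, ← add_div, le_div_iff₀ hmpos]
      nlinarith
    · filter_upwards [Filter.eventually_atTop.2 ⟨1, fun m hm => hm⟩] with m hm
      have hS := upper m
      have hSpos : (0 : ℝ) < ∑ k ∈ Finset.range (m + 1),
          (m.choose k : ℝ) * |(2 : ℝ) ^ (m - k) - 3 ^ k| := by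
        have := lower m hm
        have : (0 : ℝ) < 4 ^ (m - 1) := by positivity
        linarith [lower m hm]
      have hlog : Real.log (∑ k ∈ Finset.range (m + 1),
            (m.choose k : ℝ) * |(2 : ℝ) ^ (m - k) - 3 ^ k|)
          ≤ Real.log 2 + (m : ℝ) * Real.log 4 := by
        calc _ ≤ Real.log (2 * 4 ^ m) := Real.log_le_log hSpos hS
          _ = Real.log 2 + (m : ℝ) * Real.log 4 := by
              rw [Real.log_mul (by norm_num) (by positivity), Real.log_pow]
      have hmpos : (0 : ℝ) < m := by exact_mod_cast hm
      calc Real.log (∑ k ∈ Finset.range (m + 1),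
            (m.choose k : ℝ) * |(2 : ℝ) ^ (m - k) - 3 ^ k|) / m
          ≤ (Real.log 2 + (m : ℝ) * Real.log 4) / m := by gcongr
        _ = Real.log 4 + Real.log 2 / m := by
            rw [add_div, mul_comm, mul_div_assoc, div_self hmpos.ne', mul_one, add_comm]
  exact ⟨htend, htend.limsup_eq⟩
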